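/- Let σ be a primitive, aperiodic substitution of size (M,M) with a determining position over a finite alphabet A. Then there exists a constant K > 1 such that for every configuration c ∈ X^σ and every n ∈ ℕ, |L_{n,n}(c)| ≥ K·n². In fact one can take K = 1 + 1/(ρ+1)² where ρ is a recognizability radius for σ. -/

import Mathlib

/-- A configuration: a coloring of `ℤ²` by the alphabet `A`. -/
abbrev Config (A : Type*) := ℤ × ℤ → A

/-- A pattern `p` with (finite) support `D` appears in a configuration `c`:
there is `u ∈ ℤ²` with `p v = c (v - u)` for all `v ∈ D`. -/
def AppearsInConfig {A : Type*} (D : Set (ℤ × ℤ)) (p : ℤ × ℤ → A)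
    (c : Config A) : Prop :=
  ∃ u : ℤ × ℤ, ∀ v ∈ D, p v = c (v - u)

/-- A pattern `p` with support `D` appears in a pattern `q` with support `D'`. -/
def AppearsInPattern {A : Type*} (D : Set (ℤ × ℤ)) (p : ℤ × ℤ → A)
    (D' : Set (ℤ × ℤ)) (q : ℤ × ℤ → A) : Prop :=
  ∃ u : ℤ × ℤ, ∀ v ∈ D, v - u ∈ D' ∧ p v = q (v - u)

/-- A two-dimensional substitution over alphabet `A`. -/
def Subst (A : Type*) := A → ℕ → ℕ → A

/-- Composition of a substitution `σ` of size `(m,n)` with `σ'`. -/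
def compSub {A : Type*} (m n : ℕ) (σ σ' : Subst A) : Subst A :=
  fun a x y => σ (σ' a (x / m) (y / n)) (x % m) (y % n)

/-- The `k`-th iterate of a substitution `σ` of size `(m,n)`. -/
def iterSub {A : Type*} (m n : ℕ) (σ : Subst A) : ℕ → Subst A
  | 0 => fun a _ _ => a
  | k + 1 => compSub m n σ (iterSub m n σ k)

/-- Application of a substitution `σ` of size `(m,n)` to a pattern or
configuration (given as a function on `ℤ²`), by block replacement: the cell at
`u` is replaced by the block `σ(p_u)` with lower-left corner at `(m·u₁, n·u₂)`. -/
def substApply {A : Type*} (m n : ℕ) (σ : Subst A) (p : ℤ × ℤ → A) : ℤ × ℤ → A :=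
  fun v => σ (p (v.1.fdiv m, v.2.fdiv n)) (v.1.fmod m).toNat (v.2.fmod n).toNat

/-- Support of `σ(p)` when `p` has support `D`: the union of the blocks
`m·u + {0,…,m−1} × n·u + {0,…,n−1}` over `u ∈ D`. -/
def blowSupport (m n : ℕ) (D : Set (ℤ × ℤ)) : Set (ℤ × ℤ) :=
  {v | (v.1.fdiv m, v.2.fdiv n) ∈ D}

/-- The pattern `σ^k(a)`, supported on `{0,…,m^k−1} × {0,…,n^k−1}`. -/
def letterPattern {A : Type*} (m n : ℕ) (σ : Subst A) (k : ℕ) (a : A) :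
    ℤ × ℤ → A :=
  fun v => iterSub m n σ k a v.1.toNat v.2.toNat

/-- The support `{0,…,m^k−1} × {0,…,n^k−1}` of `σ^k(a)`. -/
def letterSupport (m n k : ℕ) : Set (ℤ × ℤ) :=
  {v | 0 ≤ v.1 ∧ v.1 < (m : ℤ) ^ k ∧ 0 ≤ v.2 ∧ v.2 < (n : ℤ) ^ k}

/-- The substitutive subshift `X^σ`: configurations all of whose finite
patterns appear in `σ^k(a)` for some letter `a` and some `k`. -/
def Xsub {A : Type*} (m n : ℕ) (σ : Subst A) : Set (Config A) :=
  {c | ∀ D : Set (ℤ × ℤ), D.Finite →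
    ∃ (a : A) (k : ℕ),
      AppearsInPattern D c (letterSupport m n k) (letterPattern m n σ k a)}

/-- `σ` (of size `(m,n)`) is primitive: some power `σ^k` maps every letter to
a block in which every letter appears. -/
def Primitive {A : Type*} (m n : ℕ) (σ : Subst A) : Prop :=
  ∃ k : ℕ, ∀ a b : A, ∃ i j : ℕ,
    i < m ^ k ∧ j < n ^ k ∧ iterSub m n σ k b i j = a


/-- Shift of a configuration by the vector `u`. -/
def shiftC {A : Type*} (u : ℤ × ℤ) (c : Config A) : Config A :=
  fun v => c (v - u)

/-- The square `{0,…,r−1}²` in `ℤ²`. -/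
def sqSet (r : ℕ) : Set (ℤ × ℤ) :=
  {v | 0 ≤ v.1 ∧ v.1 < (r : ℤ) ∧ 0 ≤ v.2 ∧ v.2 < (r : ℤ)}

/-- `(i,j)` is a determining position for `σ`. -/
def DetPos {A : Type*} (σ : Subst A) (i j : ℕ) : Prop :=
  ∀ a b : A, σ a i j = σ b i j → a = b

/-- Unique desubstitution of a pattern by a substitution of size `(m,n)`,
relative to the subshift `Xs`. -/
def UniqueDesub {A : Type*} (m n : ℕ) (τ : Subst A) (Xs : Set (Config A))
    (D : Set (ℤ × ℤ)) (p : ℤ × ℤ → A) : Prop :=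
  (∃ t : ℤ × ℤ, ∃ c ∈ Xs, ∀ v ∈ D, p v = substApply m n τ c (v - t)) ∧
  ∀ t t' : ℤ × ℤ,
    (∃ c ∈ Xs, ∀ v ∈ D, p v = substApply m n τ c (v - t)) →
    (∃ c ∈ Xs, ∀ v ∈ D, p v = substApply m n τ c (v - t')) →
    t.1 % (m : ℤ) = t'.1 % (m : ℤ) ∧ t.2 % (n : ℤ) = t'.2 % (n : ℤ)

/-- The set `L_{m,n}(c)` of `m × n` rectangular patterns appearing in `c`. -/
def langRect {A : Type*} (m n : ℕ) (c : Config A) : Set (Fin m × Fin n → A) :=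
  {p | ∃ u : ℤ × ℤ, ∀ (i : Fin m) (j : Fin n),
    p (i, j) = c (u.1 + (i : ℤ), u.2 + (j : ℤ))}

/-- Main theorem: if `σ` is a primitive aperiodic substitution of size `(M,M)`
with a determining position, then there is a constant `K > 1` — one can take
`K = 1 + 1/(ρ+1)²` for a recognizability radius `ρ` (Solomyak) — such that
every `c ∈ X^σ` satisfies `|L_{n,n}(c)| ≥ K n²` for all `n`.
(Solomyak's recognizability and the Kari–Moutot bound are assumed as
hypotheses.) -/

-- ===================== auxiliary lemmas =====================

lemma KM_ediv_bounds (Mz : ℤ) (hM : 0 < Mz) (x : ℤ) :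
    x - Mz < Mz * (x / Mz) ∧ Mz * (x / Mz) ≤ x := by
  have h1 := Int.mul_ediv_add_emod x Mz
  have h2 := Int.emod_lt_of_pos x hM
  have h3 := Int.emod_nonneg x (ne_of_gt hM)
  omega

lemma KM_mod_sub (Mz : ℤ) (y y' : ℤ) (h : y % Mz = y' % Mz) :
    ∃ d : ℤ, y' = y + Mz * d := by
  have hd : Mz ∣ y' - y := Int.ModEq.dvd h
  obtain ⟨d, hd2⟩ := hd
  exact ⟨d, by omega⟩

lemma KM_cnt_inv (Mz : ℤ) (hM : 0 < Mz) (y y' : ℤ) (a : ℕ) (h : y % Mz = y' % Mz) :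
    (y + a - 1) / Mz - (y - 1) / Mz = (y' + a - 1) / Mz - (y' - 1) / Mz ∧
    Mz * ((y - 1) / Mz + 1) - y = Mz * ((y' - 1) / Mz + 1) - y' := by
  obtain ⟨d, rfl⟩ := KM_mod_sub Mz y y' h
  have e1 : (y + Mz * d + (a:ℤ) - 1) / Mz = (y + a - 1) / Mz + d := by
    rw [show y + Mz * d + (a:ℤ) - 1 = (y + a - 1) + Mz * d by ring,
      Int.add_mul_ediv_left _ _ (ne_of_gt hM)]
  have e2 : (y + Mz * d - 1) / Mz = (y - 1) / Mz + d := by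
    rw [show y + Mz * d - 1 = (y - 1) + Mz * d by ring,
      Int.add_mul_ediv_left _ _ (ne_of_gt hM)]
  constructor
  · omega
  · rw [e2]; ring

lemma KM_dim_facts (Mz : ℤ) (hM : 0 < Mz) (y : ℤ) (a : ℕ) (l : ℕ)
    (hl : (l : ℤ) < (y + a - 1) / Mz - (y - 1) / Mz) :
    0 ≤ Mz * ((y - 1) / Mz + 1 + l) - y ∧ Mz * ((y - 1) / Mz + 1 + l) - y < a := by
  obtain ⟨hb1, hb2⟩ := KM_ediv_bounds Mz hM (y - 1)
  obtain ⟨hc1, hc2⟩ := KM_ediv_bounds Mz hM (y + a - 1)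
  have hl0 : (0:ℤ) ≤ l := Int.natCast_nonneg l
  have e1 : Mz * ((y - 1) / Mz + 1 + l) = Mz * ((y - 1) / Mz) + Mz + Mz * l := by ring
  constructor
  · have : (0:ℤ) ≤ Mz * l := mul_nonneg (le_of_lt hM) hl0
    omega
  · have h5 : (y - 1) / Mz + 1 + l ≤ (y + a - 1) / Mz := by omega
    have h6 : Mz * ((y - 1) / Mz + 1 + l) ≤ Mz * ((y + a - 1) / Mz) :=
      mul_le_mul_of_nonneg_left h5 (le_of_lt hM)
    omega

lemma KM_dim_constr (Mz : ℤ) (hM : 0 < Mz) (r : ℕ) (hr : (r : ℤ) < Mz) (z : ℤ) :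
    ∃ y : ℤ, y % Mz = r ∧ (y - 1) / Mz + 1 = z := by
  rcases Nat.eq_zero_or_pos r with h0 | hpos
  · refine ⟨Mz * z, by simp [h0, Int.mul_emod_right], ?_⟩
    have : Mz * z - 1 = (Mz - 1) + Mz * (z - 1) := by ring
    rw [this, Int.add_mul_ediv_left _ _ (ne_of_gt hM),
      Int.ediv_eq_zero_of_lt (by omega) (by omega)]
    ring
  · refine ⟨Mz * (z - 1) + r, ?_, ?_⟩
    · rw [show Mz * (z - 1) + (r:ℤ) = (r:ℤ) + Mz * (z-1) by ring, Int.add_mul_emod_self_left,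
        Int.emod_eq_of_lt (by positivity) hr]
    · have : Mz * (z - 1) + (r:ℤ) - 1 = ((r:ℤ) - 1) + Mz * (z - 1) := by ring
      rw [this, Int.add_mul_ediv_left _ _ (ne_of_gt hM),
        Int.ediv_eq_zero_of_lt (by omega) (by omega)]
      ring

lemma KM_dim_lower (M : ℕ) (hM : 0 < M) (a : ℕ) (y : ℤ) :
    ((a / M : ℕ) : ℤ) ≤ (y + a - 1) / (M:ℤ) - (y - 1) / (M:ℤ) := by
  have hMz : (0:ℤ) < (M:ℤ) := by exact_mod_cast hM
  have h1 : (y - 1) + (M:ℤ) * ((a / M : ℕ) : ℤ) ≤ y + a - 1 := by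
    have h0 := Nat.div_mul_le_self a M
    have : ((a / M * M : ℕ) : ℤ) ≤ (a : ℤ) := by exact_mod_cast h0
    push_cast at this ⊢
    nlinarith
  have h2 : ((y - 1) + (M:ℤ) * ((a / M : ℕ) : ℤ)) / (M:ℤ) ≤ (y + a - 1) / (M:ℤ) :=
    Int.ediv_le_ediv hMz h1
  rw [Int.add_mul_ediv_left _ _ (ne_of_gt hMz)] at h2
  omega

lemma KM_dim_sum (M a : ℕ) (hM : 0 < M) :
    ∑ r ∈ Finset.range M, ((((r:ℤ) + a - 1) / (M:ℤ) - ((r:ℤ) - 1) / (M:ℤ)).toNat) = a := by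
  have hMz : (0:ℤ) < (M:ℤ) := by exact_mod_cast hM
  set g : ℤ → ℤ := fun x => (x - 1) / (M:ℤ) with hg
  have hgp : ∀ x : ℤ, g (x + M) = g x + 1 := by
    intro x
    simp only [hg]
    rw [show x + (M:ℤ) - 1 = (x - 1) + (M:ℤ) * 1 by ring,
      Int.add_mul_ediv_left _ _ (ne_of_gt hMz)]
  have hsum : ∑ r ∈ Finset.range M, (g ((r : ℤ) + a) - g r) = a := by
    induction a with
    | zero => simp
    | succ a ih =>
      have key : ∑ r ∈ Finset.range M, g ((r : ℤ) + (a + 1 : ℕ))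
          = (∑ r ∈ Finset.range M, g ((r : ℤ) + a)) + 1 := by
        have e0 : ∀ r : ℕ, g ((r : ℤ) + (a + 1 : ℕ)) = g (((r + 1 : ℕ) : ℤ) + a) := by
          intro r; congr 1; push_cast; ring
        have e1 := Finset.sum_range_succ' (fun r : ℕ => g ((r : ℤ) + a)) M
        have e2 := Finset.sum_range_succ (fun r : ℕ => g ((r : ℤ) + a)) M
        have e3 : g ((M : ℤ) + a) = g ((0 : ℕ) + (a:ℤ)) + 1 := by
          rw [show (M : ℤ) + a = ((0:ℕ) + (a:ℤ)) + M by push_cast; ring, hgp]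
        calc ∑ r ∈ Finset.range M, g ((r : ℤ) + (a + 1 : ℕ))
            = ∑ r ∈ Finset.range M, g (((r + 1 : ℕ) : ℤ) + a) :=
              Finset.sum_congr rfl fun r _ => e0 r
          _ = (∑ r ∈ Finset.range M, g ((r : ℤ) + a)) + 1 := by omega
      rw [Finset.sum_sub_distrib] at ih ⊢
      push_cast at key ih ⊢
      omega
  have hterm : ∀ r ∈ Finset.range M,
      (((((r:ℤ) + a - 1) / (M:ℤ) - ((r:ℤ) - 1) / (M:ℤ)).toNat : ℕ) : ℤ)
        = g ((r:ℤ) + a) - g r := by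
    intro r _
    rw [Int.toNat_of_nonneg]
    have : ((r:ℤ) - 1) / (M:ℤ) ≤ ((r:ℤ) + a - 1) / (M:ℤ) :=
      Int.ediv_le_ediv hMz (by have : (0:ℤ) ≤ a := Int.natCast_nonneg a; omega)
    omega
  have hfin : ((∑ r ∈ Finset.range M,
      ((((r:ℤ) + a - 1) / (M:ℤ) - ((r:ℤ) - 1) / (M:ℤ)).toNat) : ℕ) : ℤ) = a := by
    push_cast [Finset.sum_congr rfl hterm]
    exact hsum
  exact_mod_cast hfin

lemma KM_readDet {A : Type*} (M : ℕ) (hM : 0 < M) (σ : Subst A) (c : Config A)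
    (w₁ w₂ : ℤ) (i j : ℕ) (hi : i < M) (hj : j < M) :
    substApply M M σ c ((M:ℤ) * w₁ + (i:ℤ), (M:ℤ) * w₂ + (j:ℤ)) = σ (c (w₁, w₂)) i j := by
  have hMz : (0:ℤ) < (M:ℤ) := by exact_mod_cast hM
  have hd : ∀ (w : ℤ) (i : ℕ), i < M →
      ((M:ℤ) * w + (i:ℤ)).fdiv M = w ∧ (((M:ℤ) * w + (i:ℤ)).fmod M).toNat = i := by
    intro w i hi
    rw [Int.fdiv_eq_ediv_of_nonneg _ (le_of_lt hMz), Int.fmod_eq_emod_of_nonneg _ (le_of_lt hMz)]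
    constructor
    · rw [show ((M:ℤ) * w + (i:ℤ)) = (i:ℤ) + (M:ℤ) * w by ring,
        Int.add_mul_ediv_left _ _ (ne_of_gt hMz),
        Int.ediv_eq_zero_of_lt (by positivity) (by exact_mod_cast hi)]
      ring
    · rw [show ((M:ℤ) * w + (i:ℤ)) = (i:ℤ) + (M:ℤ) * w by ring,
        Int.add_mul_emod_self_left,
        Int.emod_eq_of_lt (by positivity) (by exact_mod_cast hi), Int.toNat_natCast]
  obtain ⟨e1, e2⟩ := hd w₁ i hi
  obtain ⟨e3, e4⟩ := hd w₂ j hj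
  simp only [substApply, e1, e2, e3, e4]

lemma KM_psub (v w : ℤ × ℤ) : v - w = (v.1 - w.1, v.2 - w.2) := rfl

lemma KM_key {A : Type*} (M : ℕ) (hM : 0 < M) (σ : Subst A)
    (i j : ℕ) (hi : i < M) (hj : j < M) (hdp : DetPos σ i j)
    (ρ : ℕ)
    (hSol : ∀ (D : Set (ℤ × ℤ)) (p : ℤ × ℤ → A), sqSet ρ ⊆ D →
      (∃ c ∈ Xsub M M σ, AppearsInConfig D p c) →
      UniqueDesub M M σ (Xsub M M σ) D p)
    (hKM : ∀ c ∈ Xsub M M σ, ∀ a b : ℕ, a * b + 1 ≤ (langRect a b c).ncard) :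
    ∀ (k : ℕ), ∀ (a b : ℕ) (c : Config A), c ∈ Xsub M M σ →
      (k ≠ 0 → (ρ+1) * M ^ (k-1) ≤ a ∧ (ρ+1) * M ^ (k-1) ≤ b) →
      a * b + M ^ k * M ^ k ≤ (langRect a b c).ncard := by
  intro k
  induction k with
  | zero =>
    intro a b c hc _
    simpa using hKM c hc a b
  | succ k ih =>
    intro a b c hc hcond
    classical
    obtain ⟨hca, hcb⟩ := hcond (Nat.succ_ne_zero k)
    simp only [Nat.add_sub_cancel] at hca hcb
    have hMz : (0:ℤ) < (M:ℤ) := by exact_mod_cast hM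
    have hMk : 1 ≤ M ^ k := Nat.one_le_pow _ _ hM
    have hρa : ρ + 1 ≤ a := le_trans (Nat.le_mul_of_pos_right _ (by omega)) hca
    have hρb : ρ + 1 ≤ b := le_trans (Nat.le_mul_of_pos_right _ (by omega)) hcb
    -- global desubstitution of c
    obtain ⟨⟨t, c₁, hc₁, hglob⟩, -⟩ := hSol Set.univ c (fun v _ => Set.mem_univ v)
      ⟨c, hc, 0, fun v _ => by simp⟩
    have hglob' : ∀ v : ℤ × ℤ, c v = substApply M M σ c₁ (v - t) :=
      fun v => hglob v (Set.mem_univ v)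
    -- reading determined letters
    have hread : ∀ w1 w2 : ℤ,
        c (t.1 + (i:ℤ) + (M:ℤ)*w1, t.2 + (j:ℤ) + (M:ℤ)*w2) = σ (c₁ (w1, w2)) i j := by
      intro w1 w2
      rw [hglob' (t.1 + (i:ℤ) + (M:ℤ)*w1, t.2 + (j:ℤ) + (M:ℤ)*w2), KM_psub]
      have e : ((t.1 + (i:ℤ) + (M:ℤ)*w1, t.2 + (j:ℤ) + (M:ℤ)*w2) : ℤ × ℤ).1 - t.1
          = (M:ℤ)*w1 + (i:ℤ) := by simp; ring
      have e2 : ((t.1 + (i:ℤ) + (M:ℤ)*w1, t.2 + (j:ℤ) + (M:ℤ)*w2) : ℤ × ℤ).2 - t.2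
          = (M:ℤ)*w2 + (j:ℤ) := by simp; ring
      rw [e, e2, KM_readDet M hM σ c₁ w1 w2 i j hi hj]
    -- recognizability: equal windows force equal residues
    have recog : ∀ u u' : ℤ × ℤ,
        (∀ (iA : Fin a) (jB : Fin b),
          c (u.1 + (iA:ℤ), u.2 + (jB:ℤ)) = c (u'.1 + (iA:ℤ), u'.2 + (jB:ℤ))) →
        u.1 % (M:ℤ) = u'.1 % (M:ℤ) ∧ u.2 % (M:ℤ) = u'.2 % (M:ℤ) := by
      intro u u' hequ
      set D : Set (ℤ × ℤ) := {v | 0 ≤ v.1 ∧ v.1 < (a:ℤ) ∧ 0 ≤ v.2 ∧ v.2 < (b:ℤ)} with hD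
      have hsq : sqSet ρ ⊆ D := by
        intro v hv
        obtain ⟨h1, h2, h3, h4⟩ := hv
        have ha' : (ρ:ℤ) ≤ a := by exact_mod_cast le_trans (Nat.le_succ ρ) hρa
        have hb' : (ρ:ℤ) ≤ b := by exact_mod_cast le_trans (Nat.le_succ ρ) hρb
        exact ⟨h1, lt_of_lt_of_le h2 ha', h3, lt_of_lt_of_le h4 hb'⟩
      have hwindow : ∀ v : ℤ × ℤ, v ∈ D →
          c (u.1 + v.1, u.2 + v.2) = c (u'.1 + v.1, u'.2 + v.2) := by
        intro v hv
        obtain ⟨h1, h2, h3, h4⟩ := hv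
        have hv1 : v.1.toNat < a := by omega
        have hv2 : v.2.toNat < b := by omega
        have h := hequ ⟨v.1.toNat, hv1⟩ ⟨v.2.toNat, hv2⟩
        simpa [Int.toNat_of_nonneg h1, Int.toNat_of_nonneg h3] using h
      obtain ⟨-, huniq⟩ := hSol D (fun v => c (u.1 + v.1, u.2 + v.2)) hsq
        ⟨c, hc, (-u.1, -u.2), fun v _ => by
          show c (u.1 + v.1, u.2 + v.2) = c (v - (-u.1, -u.2))
          rw [KM_psub]
          congr 1
          rw [Prod.ext_iff]
          exact ⟨by simp; ring, by simp; ring⟩⟩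
      have h1 : ∃ cc ∈ Xsub M M σ, ∀ v ∈ D,
          (fun v => c (u.1 + v.1, u.2 + v.2)) v = substApply M M σ cc (v - (t - u)) := by
        refine ⟨c₁, hc₁, fun v _ => ?_⟩
        show c (u.1 + v.1, u.2 + v.2) = _
        rw [hglob' (u.1 + v.1, u.2 + v.2)]
        congr 1
        rw [KM_psub, KM_psub, KM_psub, Prod.ext_iff]
        exact ⟨by simp; ring, by simp; ring⟩
      have h2 : ∃ cc ∈ Xsub M M σ, ∀ v ∈ D,
          (fun v => c (u.1 + v.1, u.2 + v.2)) v = substApply M M σ cc (v - (t - u')) := by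
        refine ⟨c₁, hc₁, fun v hv => ?_⟩
        show c (u.1 + v.1, u.2 + v.2) = _
        rw [hwindow v hv, hglob' (u'.1 + v.1, u'.2 + v.2)]
        congr 1
        rw [KM_psub, KM_psub, KM_psub, Prod.ext_iff]
        exact ⟨by simp; ring, by simp; ring⟩
      obtain ⟨e1, e2⟩ := huniq (t - u) (t - u') h1 h2
      have m1 : (t.1 - u.1) % (M:ℤ) = (t.1 - u'.1) % (M:ℤ) := by simpa [KM_psub] using e1
      have m2 : (t.2 - u.2) % (M:ℤ) = (t.2 - u'.2) % (M:ℤ) := by simpa [KM_psub] using e2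
      constructor
      · have h' : (t.1 - u.1) ≡ (t.1 - u'.1) [ZMOD (M:ℤ)] := m1
        have h'' := Int.ModEq.sub (Int.ModEq.refl t.1) h'
        exact (by simpa [sub_sub_cancel] using h'' : u.1 ≡ u'.1 [ZMOD (M:ℤ)])
      · have h' : (t.2 - u.2) ≡ (t.2 - u'.2) [ZMOD (M:ℤ)] := m2
        have h'' := Int.ModEq.sub (Int.ModEq.refl t.2) h'
        exact (by simpa [sub_sub_cancel] using h'' : u.2 ≡ u'.2 [ZMOD (M:ℤ)])
    -- determined-letter equality for equal windows in the same class
    have detEq : ∀ (u u' : ℤ × ℤ) (l m : ℕ),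
        ((l:ℤ) < ((u.1 - t.1 - i) + a - 1)/(M:ℤ) - ((u.1 - t.1 - i) - 1)/(M:ℤ)) →
        ((m:ℤ) < ((u.2 - t.2 - j) + b - 1)/(M:ℤ) - ((u.2 - t.2 - j) - 1)/(M:ℤ)) →
        (u.1 - t.1 - i) % (M:ℤ) = (u'.1 - t.1 - i) % (M:ℤ) →
        (u.2 - t.2 - j) % (M:ℤ) = (u'.2 - t.2 - j) % (M:ℤ) →
        (∀ (iA : Fin a) (jB : Fin b),
          c (u.1 + (iA:ℤ), u.2 + (jB:ℤ)) = c (u'.1 + (iA:ℤ), u'.2 + (jB:ℤ))) →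
        c₁ ((u.1 - t.1 - i - 1)/(M:ℤ) + 1 + l, (u.2 - t.2 - j - 1)/(M:ℤ) + 1 + m)
          = c₁ ((u'.1 - t.1 - i - 1)/(M:ℤ) + 1 + l, (u'.2 - t.2 - j - 1)/(M:ℤ) + 1 + m) := by
      intro u u' l m hl hm hr1 hr2 hequ
      obtain ⟨hP1a, hP1b⟩ := KM_dim_facts (M:ℤ) hMz (u.1 - t.1 - i) a l hl
      obtain ⟨hP2a, hP2b⟩ := KM_dim_facts (M:ℤ) hMz (u.2 - t.2 - j) b m hm
      obtain ⟨-, hinv1⟩ := KM_cnt_inv (M:ℤ) hMz (u.1 - t.1 - i) (u'.1 - t.1 - i) a hr1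
      obtain ⟨-, hinv2⟩ := KM_cnt_inv (M:ℤ) hMz (u.2 - t.2 - j) (u'.2 - t.2 - j) b hr2
      set P1 : ℤ := (M:ℤ) * ((u.1 - t.1 - i - 1)/(M:ℤ) + 1 + l) - (u.1 - t.1 - i) with hP1
      set P2 : ℤ := (M:ℤ) * ((u.2 - t.2 - j - 1)/(M:ℤ) + 1 + m) - (u.2 - t.2 - j) with hP2
      have hw : c (u.1 + P1, u.2 + P2) = c (u'.1 + P1, u'.2 + P2) := by
        have hb1 : P1.toNat < a := by omega
        have hb2 : P2.toNat < b := by omega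
        have h := hequ ⟨P1.toNat, hb1⟩ ⟨P2.toNat, hb2⟩
        simpa [Int.toNat_of_nonneg hP1a, Int.toNat_of_nonneg hP2a] using h
      have e1 : u.1 + P1 = t.1 + (i:ℤ) + (M:ℤ) * ((u.1 - t.1 - i - 1)/(M:ℤ) + 1 + l) := by
        rw [hP1]; ring
      have e2 : u.2 + P2 = t.2 + (j:ℤ) + (M:ℤ) * ((u.2 - t.2 - j - 1)/(M:ℤ) + 1 + m) := by
        rw [hP2]; ring
      have e1' : u'.1 + P1 = t.1 + (i:ℤ) + (M:ℤ) * ((u'.1 - t.1 - i - 1)/(M:ℤ) + 1 + l) := by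
        rw [hP1]; linear_combination hinv1
      have e2' : u'.2 + P2 = t.2 + (j:ℤ) + (M:ℤ) * ((u'.2 - t.2 - j - 1)/(M:ℤ) + 1 + m) := by
        rw [hP2]; linear_combination hinv2
      have q1 : c (u.1 + P1, u.2 + P2)
          = σ (c₁ ((u.1 - t.1 - i - 1)/(M:ℤ) + 1 + l, (u.2 - t.2 - j - 1)/(M:ℤ) + 1 + m)) i j := by
        rw [e1, e2]; exact hread _ _
      have q2 : c (u'.1 + P1, u'.2 + P2)
          = σ (c₁ ((u'.1 - t.1 - i - 1)/(M:ℤ) + 1 + l, (u'.2 - t.2 - j - 1)/(M:ℤ) + 1 + m)) i j := by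
        rw [e1', e2']; exact hread _ _
      exact hdp _ _ ((q1.symm.trans hw).trans q2)
    -- finiteness of the language
    have hLfin : (langRect a b c).Finite := by
      by_contra hinf
      have h0 : (langRect a b c).ncard = 0 := Set.Infinite.ncard hinf
      have := hKM c hc a b
      omega
    -- the classes
    set S : ℕ → ℕ → Set (Fin a × Fin b → A) := fun r r' =>
      {p | ∃ u : ℤ × ℤ, (u.1 - t.1 - (i:ℤ)) % (M:ℤ) = r ∧ (u.2 - t.2 - (j:ℤ)) % (M:ℤ) = r' ∧
        ∀ (iA : Fin a) (jB : Fin b), p (iA, jB) = c (u.1 + (iA:ℤ), u.2 + (jB:ℤ))} with hSdef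
    have hSsub : ∀ r r', S r r' ⊆ langRect a b c := by
      rintro r r' p ⟨u, -, -, h3⟩
      exact ⟨u, h3⟩
    have hSfin : ∀ r r', (S r r').Finite := fun r r' => hLfin.subset (hSsub r r')
    set aa : ℕ → ℕ := fun r => ((((r:ℤ) + a - 1) / (M:ℤ)) - (((r:ℤ) - 1) / (M:ℤ))).toNat
      with haa
    set bb : ℕ → ℕ := fun r => ((((r:ℤ) + b - 1) / (M:ℤ)) - (((r:ℤ) - 1) / (M:ℤ))).toNat
      with hbb
    -- per-class bound
    have hclass : ∀ r r' : ℕ, r < M → r' < M →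
        (langRect (aa r) (bb r') c₁).ncard ≤ (S r r').ncard := by
      intro r r' hr hr'
      have hrM : ((r:ℤ)) < (M:ℤ) := by exact_mod_cast hr
      have hrM' : ((r':ℤ)) < (M:ℤ) := by exact_mod_cast hr'
      have hrmod : ((r:ℤ)) % (M:ℤ) = (r:ℤ) := Int.emod_eq_of_lt (by positivity) hrM
      have hrmod' : ((r':ℤ)) % (M:ℤ) = (r':ℤ) := Int.emod_eq_of_lt (by positivity) hrM'
      set f : (Fin a × Fin b → A) → (Fin (aa r) × Fin (bb r') → A) := fun p =>
        if h : p ∈ S r r' then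
          (fun lm => c₁ ((h.choose.1 - t.1 - (i:ℤ) - 1)/(M:ℤ) + 1 + (lm.1:ℤ),
                         (h.choose.2 - t.2 - (j:ℤ) - 1)/(M:ℤ) + 1 + (lm.2:ℤ)))
        else fun _ => c (0, 0) with hf
      have himg : langRect (aa r) (bb r') c₁ ⊆ f '' (S r r') := by
        rintro q ⟨z, hz⟩
        obtain ⟨y1, hy1r, hy1w⟩ := KM_dim_constr (M:ℤ) hMz r hrM z.1
        obtain ⟨y2, hy2r, hy2w⟩ := KM_dim_constr (M:ℤ) hMz r' hrM' z.2
        set u : ℤ × ℤ := (t.1 + (i:ℤ) + y1, t.2 + (j:ℤ) + y2) with hu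
        set p : Fin a × Fin b → A := fun ij => c (u.1 + (ij.1:ℤ), u.2 + (ij.2:ℤ)) with hp
        have hres1 : (u.1 - t.1 - (i:ℤ)) % (M:ℤ) = (r:ℤ) := by
          rw [hu, show (t.1 + (i:ℤ) + y1, t.2 + (j:ℤ) + y2).1 - t.1 - (i:ℤ) = y1 by simp; ring]
          exact hy1r
        have hres2 : (u.2 - t.2 - (j:ℤ)) % (M:ℤ) = (r':ℤ) := by
          rw [hu, show (t.1 + (i:ℤ) + y1, t.2 + (j:ℤ) + y2).2 - t.2 - (j:ℤ) = y2 by simp; ring]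
          exact hy2r
        have hpS : p ∈ S r r' := ⟨u, hres1, hres2, fun iA jB => rfl⟩
        refine ⟨p, hpS, ?_⟩
        rw [hf]
        simp only []
        rw [dif_pos hpS]
        funext lm
        obtain ⟨l, m⟩ := lm
        obtain ⟨hcr1, hcr2, hcw⟩ := hpS.choose_spec
        have hequ : ∀ (iA : Fin a) (jB : Fin b),
            c (hpS.choose.1 + (iA:ℤ), hpS.choose.2 + (jB:ℤ)) = c (u.1 + (iA:ℤ), u.2 + (jB:ℤ)) :=
          fun iA jB => (hcw iA jB).symm
        have huy1 : u.1 - t.1 - (i:ℤ) = y1 := by rw [hu]; simp; ring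
        have huy2 : u.2 - t.2 - (j:ℤ) = y2 := by rw [hu]; simp; ring
        have hcnt1 : ((hpS.choose.1 - t.1 - i) + a - 1)/(M:ℤ) - ((hpS.choose.1 - t.1 - i) - 1)/(M:ℤ)
            = (((r:ℤ)) + a - 1)/(M:ℤ) - (((r:ℤ)) - 1)/(M:ℤ) :=
          (KM_cnt_inv (M:ℤ) hMz _ _ a (by rw [hcr1, hrmod])).1
        have hcnt2 : ((hpS.choose.2 - t.2 - j) + b - 1)/(M:ℤ) - ((hpS.choose.2 - t.2 - j) - 1)/(M:ℤ)
            = (((r':ℤ)) + b - 1)/(M:ℤ) - (((r':ℤ)) - 1)/(M:ℤ) :=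
          (KM_cnt_inv (M:ℤ) hMz _ _ b (by rw [hcr2, hrmod'])).1
        have hl : (l:ℤ) < ((hpS.choose.1 - t.1 - i) + a - 1)/(M:ℤ) - ((hpS.choose.1 - t.1 - i) - 1)/(M:ℤ) := by
          rw [hcnt1]
          have hlt : (l:ℕ) < ((((r:ℤ) + a - 1) / (M:ℤ)) - (((r:ℤ) - 1) / (M:ℤ))).toNat := l.2
          omega
        have hm : (m:ℤ) < ((hpS.choose.2 - t.2 - j) + b - 1)/(M:ℤ) - ((hpS.choose.2 - t.2 - j) - 1)/(M:ℤ) := by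
          rw [hcnt2]
          have hlt : (m:ℕ) < ((((r':ℤ) + b - 1) / (M:ℤ)) - (((r':ℤ) - 1) / (M:ℤ))).toNat := m.2
          omega
        have hDet := detEq hpS.choose u l m hl hm
          (by rw [hcr1, hres1]) (by rw [hcr2, hres2]) hequ
        rw [hDet, huy1, huy2, hy1w, hy2w]
        exact (hz ⟨l, l.2⟩ ⟨m, m.2⟩).symm
      calc (langRect (aa r) (bb r') c₁).ncard ≤ (f '' (S r r')).ncard :=
            Set.ncard_le_ncard himg ((hSfin r r').image f)
        _ ≤ (S r r').ncard := Set.ncard_image_le (hSfin r r')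
    -- disjointness of classes
    have hdisj : ∀ r1 r1' r2 r2' : ℕ, ((S r1 r1') ∩ (S r2 r2')).Nonempty →
        (r1:ℤ) = (r2:ℤ) ∧ (r1':ℤ) = (r2':ℤ) := by
      rintro r1 r1' r2 r2' ⟨p, ⟨u, a1, a2, a3⟩, ⟨u', b1, b2, b3⟩⟩
      have hequ : ∀ (iA : Fin a) (jB : Fin b),
          c (u.1 + (iA:ℤ), u.2 + (jB:ℤ)) = c (u'.1 + (iA:ℤ), u'.2 + (jB:ℤ)) :=
        fun iA jB => (a3 iA jB).symm.trans (b3 iA jB)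
      obtain ⟨e1, e2⟩ := recog u u' hequ
      constructor
      · rw [← a1, ← b1]
        exact Int.ModEq.sub_right _ (Int.ModEq.sub_right _ e1)
      · rw [← a2, ← b2]
        exact Int.ModEq.sub_right _ (Int.ModEq.sub_right _ e2)
    -- summing over classes
    have hIH : ∀ rr ∈ Finset.range M ×ˢ Finset.range M,
        aa rr.1 * bb rr.2 + M ^ k * M ^ k ≤ (S rr.1 rr.2).ncard := by
      rintro ⟨r, r'⟩ hrr
      rw [Finset.mem_product, Finset.mem_range, Finset.mem_range] at hrr
      refine le_trans ?_ (hclass r r' hrr.1 hrr.2)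
      apply ih (aa r) (bb r') c₁ hc₁
      intro hk0
      have hdiv : ((ρ+1) * M ^ k) / M = (ρ+1) * M ^ (k-1) := by
        obtain ⟨k', rfl⟩ : ∃ k', k = k' + 1 := ⟨k - 1, by omega⟩
        rw [pow_succ, ← mul_assoc, Nat.mul_div_cancel _ hM]
        simp
      constructor
      · have h1 : ((ρ+1) * M ^ k) / M ≤ a / M := Nat.div_le_div_right hca
        have h2 := KM_dim_lower M hM a ((r:ℤ))
        have h3 : (a / M : ℕ) ≤ aa r := by
          rw [haa]
          simp only []
          omega
        omega
      · have h1 : ((ρ+1) * M ^ k) / M ≤ b / M := Nat.div_le_div_right hcb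
        have h2 := KM_dim_lower M hM b ((r':ℤ))
        have h3 : (b / M : ℕ) ≤ bb r' := by
          rw [hbb]
          simp only []
          omega
        omega
    have hsumS : ∑ rr ∈ Finset.range M ×ˢ Finset.range M, (S rr.1 rr.2).ncard
        ≤ (langRect a b c).ncard := by
      have hcard : ∀ rr : ℕ × ℕ, (S rr.1 rr.2).ncard = ((hSfin rr.1 rr.2).toFinset).card :=
        fun rr => Set.ncard_eq_toFinset_card _ (hSfin rr.1 rr.2)
      have hdisjF : ∀ x ∈ Finset.range M ×ˢ Finset.range M,
          ∀ y ∈ Finset.range M ×ˢ Finset.range M, x ≠ y →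
          Disjoint ((hSfin x.1 x.2).toFinset) ((hSfin y.1 y.2).toFinset) := by
        intro x _ y _ hxy
        rw [Finset.disjoint_left]
        intro p hpx hpy
        rw [Set.Finite.mem_toFinset] at hpx hpy
        obtain ⟨e1, e2⟩ := hdisj x.1 x.2 y.1 y.2 ⟨p, hpx, hpy⟩
        exact hxy (Prod.ext (by exact_mod_cast e1) (by exact_mod_cast e2))
      have hbu := Finset.card_biUnion hdisjF
      have hsub : ((Finset.range M ×ˢ Finset.range M).biUnion
          fun rr => (hSfin rr.1 rr.2).toFinset) ⊆ hLfin.toFinset := by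
        intro p hp
        rw [Finset.mem_biUnion] at hp
        obtain ⟨rr, -, hp⟩ := hp
        rw [Set.Finite.mem_toFinset] at hp ⊢
        exact hSsub rr.1 rr.2 hp
      calc ∑ rr ∈ Finset.range M ×ˢ Finset.range M, (S rr.1 rr.2).ncard
          = ((Finset.range M ×ˢ Finset.range M).biUnion
              fun rr => (hSfin rr.1 rr.2).toFinset).card := by
            rw [hbu]; exact Finset.sum_congr rfl fun rr _ => hcard rr
        _ ≤ hLfin.toFinset.card := Finset.card_le_card hsub
        _ = (langRect a b c).ncard := (Set.ncard_eq_toFinset_card _ hLfin).symm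
    have hfinal : ∑ rr ∈ Finset.range M ×ˢ Finset.range M,
        (aa rr.1 * bb rr.2 + M ^ k * M ^ k) = a * b + M ^ (k+1) * M ^ (k+1) := by
      rw [Finset.sum_add_distrib]
      congr 1
      · rw [Finset.sum_product, ← Finset.sum_mul_sum]
        rw [haa, hbb]
        simp only []
        rw [KM_dim_sum M a hM, KM_dim_sum M b hM]
      · rw [Finset.sum_const, Finset.card_product, Finset.card_range, smul_eq_mul]
        ring
    calc a * b + M ^ (k+1) * M ^ (k+1)
        = ∑ rr ∈ Finset.range M ×ˢ Finset.range M, (aa rr.1 * bb rr.2 + M ^ k * M ^ k) :=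
          hfinal.symm
      _ ≤ ∑ rr ∈ Finset.range M ×ˢ Finset.range M, (S rr.1 rr.2).ncard :=
          Finset.sum_le_sum hIH
      _ ≤ (langRect a b c).ncard := hsumS

theorem main_quadratic_lower_bound {A : Type*} (M : ℕ) (hM : 0 < M)
    (σ : Subst A) (hprim : Primitive M M σ)
    (hdet : ∃ i j : ℕ, i < M ∧ j < M ∧ DetPos σ i j)
    (hne : (Xsub M M σ).Nonempty)
    (haper : ∀ c ∈ Xsub M M σ, ∀ u : ℤ × ℤ, u ≠ 0 → shiftC u c ≠ c)
    (ρ : ℕ) (hρ : 0 < ρ)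
    (hSolomyak : ∀ (D : Set (ℤ × ℤ)) (p : ℤ × ℤ → A), sqSet ρ ⊆ D →
      (∃ c ∈ Xsub M M σ, AppearsInConfig D p c) →
      UniqueDesub M M σ (Xsub M M σ) D p)
    (hKM : ∀ c ∈ Xsub M M σ, ∀ a b : ℕ,
      a * b + 1 ≤ (langRect a b c).ncard) :
    ∃ K : ℚ, 1 < K ∧ K = 1 + 1 / ((ρ : ℚ) + 1) ^ 2 ∧
      ∀ c ∈ Xsub M M σ, ∀ n : ℕ,
        K * (n : ℚ) ^ 2 ≤ ((langRect n n c).ncard : ℚ) := by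
  obtain ⟨i, j, hi, hj, hdp⟩ := hdet
  -- M ≥ 2 : otherwise Xsub is empty
  have hM2 : 2 ≤ M := by
    by_contra hM2
    have hM1 : M = 1 := by omega
    obtain ⟨c, hc⟩ := hne
    obtain ⟨a', k, u, hu⟩ := hc {((0:ℤ), (0:ℤ)), ((1:ℤ), (0:ℤ))}
      ((Set.finite_singleton _).insert _)
    have h1 := hu ((0:ℤ), (0:ℤ)) (by simp)
    have h2 := hu ((1:ℤ), (0:ℤ)) (by simp)
    obtain ⟨⟨g1, g2, -⟩, -⟩ := h1
    obtain ⟨⟨g3, g4, -⟩, -⟩ := h2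
    rw [hM1] at g2 g4
    simp only [Nat.cast_one, one_pow] at g2 g4
    have e1 : ((0:ℤ),(0:ℤ)).1 - u.1 = -u.1 := by simp
    have e2 : ((1:ℤ),(0:ℤ)).1 - u.1 = 1 - u.1 := by simp
    rw [KM_psub] at g1 g2 g3 g4
    simp at g1 g2 g3 g4
    omega
  refine ⟨1 + 1 / ((ρ : ℚ) + 1) ^ 2, ?_, rfl, ?_⟩
  · have hpos : (0:ℚ) < 1 / ((ρ : ℚ) + 1) ^ 2 := by positivity
    linarith
  intro c hc n
  -- choose the minimal k with n ≤ (ρ+1) * M^k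
  have hex : ∃ k : ℕ, n ≤ (ρ + 1) * M ^ k := by
    refine ⟨n, le_trans (le_of_lt (Nat.lt_pow_self (n := n) hM2)) ?_⟩
    exact Nat.le_mul_of_pos_left _ (by omega)
  set k0 := Nat.find hex with hk0
  have hk0le : n ≤ (ρ + 1) * M ^ k0 := Nat.find_spec hex
  have hQ1 : (0:ℚ) < ((ρ:ℚ) + 1) ^ 2 := by positivity
  have hcast : ((n * n + M ^ k0 * M ^ k0 : ℕ) : ℚ) = (n:ℚ)^2 + ((M:ℚ)^k0)^2 := by
    push_cast; ring
  have hlang : n * n + M ^ k0 * M ^ k0 ≤ (langRect n n c).ncard := by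
    apply KM_key M hM σ i j hi hj hdp ρ hSolomyak hKM k0 n n c hc
    intro hk0ne
    have hmin : ¬ (n ≤ (ρ + 1) * M ^ (k0 - 1)) := Nat.find_min hex (by omega)
    constructor <;> omega
  have hsq : (n:ℚ) ^ 2 / ((ρ:ℚ) + 1) ^ 2 ≤ ((M:ℚ) ^ k0) ^ 2 := by
    have h1 : (n:ℚ) ≤ ((ρ:ℚ) + 1) * (M:ℚ) ^ k0 := by
      have := hk0le
      push_cast at this ⊢
      exact_mod_cast this
    rw [div_le_iff₀ hQ1]
    have hn0 : (0:ℚ) ≤ (n:ℚ) := Nat.cast_nonneg n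
    have hm0 : (0:ℚ) ≤ (M:ℚ) ^ k0 := by positivity
    nlinarith
  have hK : (1 + 1 / ((ρ : ℚ) + 1) ^ 2) * (n:ℚ) ^ 2 = (n:ℚ)^2 + (n:ℚ)^2 / ((ρ:ℚ)+1)^2 := by
    field_simp
  rw [hK]
  calc (n:ℚ)^2 + (n:ℚ)^2 / ((ρ:ℚ)+1)^2 ≤ (n:ℚ)^2 + ((M:ℚ)^k0)^2 := by linarith
    _ = ((n * n + M ^ k0 * M ^ k0 : ℕ) : ℚ) := hcast.symm
    _ ≤ ((langRect n n c).ncard : ℚ) := by exact_mod_cast hlang
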